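/- Let $\beta_1, \ldots, \beta_k < 0$ with $\liminf_{n\to\infty} \alpha_n / n > (\log 2)/|\beta_1|$. Then $\lim_{n\to\infty} \frac{\sum_{j=0}^{n} j \binom{n}{j} e^{n\alpha_n \sum_{p=1}^k \beta_p (j/n)^p}}{n\, e^{n\alpha_n \sum_{p=1}^k \beta_p (1/n)^p}} = 1$. -/

import Mathlib

open Real Filter Finset

theorem stmt17 (k : ℕ) (hk : 1 ≤ k) (β : ℕ → ℝ)
    (hβ : ∀ p ∈ Finset.Icc 1 k, β p < 0)
    (α : ℕ → ℝ)
    (h : Real.log 2 / |β 1| < Filter.liminf (fun n : ℕ => α n / n) atTop) :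
    Tendsto (fun n : ℕ =>
        (∑ j ∈ Finset.range (n + 1), (j : ℝ) * (n.choose j : ℝ) *
            Real.exp ((n : ℝ) * α n * ∑ p ∈ Finset.Icc 1 k, β p * ((j : ℝ) / n) ^ p)) /
        ((n : ℝ) * Real.exp ((n : ℝ) * α n * ∑ p ∈ Finset.Icc 1 k, β p * ((1 : ℝ) / n) ^ p)))
      atTop (nhds 1) := by
  have h1k : (1:ℕ) ∈ Finset.Icc 1 k := Finset.mem_Icc.2 ⟨le_refl 1, hk⟩
  have hβ1 : β 1 < 0 := hβ 1 h1k
  have hb1 : 0 < |β 1| := abs_pos.2 (ne_of_lt hβ1)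
  have habs : β 1 = -|β 1| := by rw [abs_of_neg hβ1]; ring
  have hq : 0 < Real.log 2 / |β 1| := div_pos (Real.log_pos one_lt_two) hb1
  rw [Filter.liminf_eq] at h
  have hne : {a : ℝ | ∀ᶠ n in (atTop : Filter ℕ), a ≤ α n / n}.Nonempty := by
    by_contra hemp
    rw [Set.not_nonempty_iff_eq_empty] at hemp
    rw [hemp, Real.sSup_empty] at h
    linarith
  obtain ⟨c, hcS, hc⟩ := exists_lt_of_lt_csSup hne h
  have hcS' : ∀ᶠ n in (atTop : Filter ℕ), c ≤ α n / n := hcS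
  have hc0 : 0 < c := lt_trans hq hc
  have hd : Real.log 2 - c * |β 1| < 0 := by
    have := (div_lt_iff₀ hb1).1 hc
    linarith
  set d := Real.log 2 - c * |β 1| with hdd
  have hup : Tendsto (fun n : ℕ => 1 + Real.exp ((n:ℝ) * d)) atTop (nhds 1) := by
    have h1 : Tendsto (fun n : ℕ => (n:ℝ) * d) atTop atBot :=
      Tendsto.atTop_mul_const_of_neg hd tendsto_natCast_atTop_atTop
    have h2 := Real.tendsto_exp_atBot.comp h1
    have h3 := (tendsto_const_nhds : Tendsto (fun _ : ℕ => (1:ℝ)) atTop (nhds 1)).add h2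
    simpa using h3
  have hmain : ∀ᶠ n : ℕ in atTop,
      (1:ℝ) ≤ (∑ j ∈ Finset.range (n + 1), (j : ℝ) * (n.choose j : ℝ) *
            Real.exp ((n : ℝ) * α n * ∑ p ∈ Finset.Icc 1 k, β p * ((j : ℝ) / n) ^ p)) /
        ((n : ℝ) * Real.exp ((n : ℝ) * α n * ∑ p ∈ Finset.Icc 1 k, β p * ((1 : ℝ) / n) ^ p)) ∧
      (∑ j ∈ Finset.range (n + 1), (j : ℝ) * (n.choose j : ℝ) *
            Real.exp ((n : ℝ) * α n * ∑ p ∈ Finset.Icc 1 k, β p * ((j : ℝ) / n) ^ p)) /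
        ((n : ℝ) * Real.exp ((n : ℝ) * α n * ∑ p ∈ Finset.Icc 1 k, β p * ((1 : ℝ) / n) ^ p))
        ≤ 1 + Real.exp ((n:ℝ) * d) := by
    filter_upwards [hcS', eventually_ge_atTop 1] with n hcn hn1
    have hN : (0:ℝ) < (n:ℝ) := by exact_mod_cast Nat.pos_of_ne_zero (by omega)
    have hα : c * (n:ℝ) ≤ α n := (le_div_iff₀ hN).1 hcn
    have hα0 : 0 ≤ α n := le_trans (mul_nonneg hc0.le hN.le) hα
    set E1 : ℝ := (n:ℝ) * α n * ∑ p ∈ Finset.Icc 1 k, β p * ((1:ℝ)/(n:ℝ)) ^ p with hE1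
    -- per-term bound on the non-j=1 terms
    have hterm : ∀ j ∈ (Finset.range (n+1)).erase 1,
        (j:ℝ) * (n.choose j : ℝ) *
          Real.exp ((n:ℝ) * α n * ∑ p ∈ Finset.Icc 1 k, β p * ((j:ℝ)/(n:ℝ)) ^ p)
          ≤ (n:ℝ) * (n.choose j : ℝ) * Real.exp (E1 - c * (n:ℝ) * |β 1|) := by
      intro j hj
      have hj1 : j ≠ 1 := (Finset.mem_erase.1 hj).1
      have hjn : j ≤ n := by
        have := Finset.mem_range.1 (Finset.mem_erase.1 hj).2; omega
      rcases Nat.eq_zero_or_pos j with h0 | hpos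
      · subst h0; simp; positivity
      · have hj2 : 2 ≤ j := by omega
        have hj2' : (2:ℝ) ≤ (j:ℝ) := by exact_mod_cast hj2
        have hkey : ∑ p ∈ Finset.Icc 1 k, β p * ((j:ℝ)/(n:ℝ)) ^ p
            ≤ (∑ p ∈ Finset.Icc 1 k, β p * ((1:ℝ)/(n:ℝ)) ^ p) + β 1 * ((j:ℝ)-1)/(n:ℝ) := by
          have hle : ∀ p ∈ Finset.Icc 1 k, β p * ((j:ℝ)/(n:ℝ)) ^ p
              ≤ β p * ((1:ℝ)/(n:ℝ)) ^ p + (if p = 1 then β 1 * ((j:ℝ)-1)/(n:ℝ) else 0) := by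
            intro p hp
            by_cases hp1 : p = 1
            · subst hp1
              simp only [↓reduceIte, pow_one]
              apply le_of_eq
              field_simp
              ring
            · simp only [if_neg hp1, add_zero]
              have hdiv : (1:ℝ)/(n:ℝ) ≤ (j:ℝ)/(n:ℝ) := by gcongr; linarith
              have hpow : ((1:ℝ)/(n:ℝ)) ^ p ≤ ((j:ℝ)/(n:ℝ)) ^ p :=
                pow_le_pow_left₀ (by positivity) hdiv p
              exact mul_le_mul_of_nonpos_left hpow (hβ p hp).le
          calc ∑ p ∈ Finset.Icc 1 k, β p * ((j:ℝ)/(n:ℝ)) ^ p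
              ≤ ∑ p ∈ Finset.Icc 1 k, (β p * ((1:ℝ)/(n:ℝ)) ^ p
                  + (if p = 1 then β 1 * ((j:ℝ)-1)/(n:ℝ) else 0)) := Finset.sum_le_sum hle
            _ = (∑ p ∈ Finset.Icc 1 k, β p * ((1:ℝ)/(n:ℝ)) ^ p) + β 1 * ((j:ℝ)-1)/(n:ℝ) := by
                rw [Finset.sum_add_distrib,
                  Finset.sum_ite_eq' (Finset.Icc 1 k) 1 (fun _ => β 1 * ((j:ℝ)-1)/(n:ℝ)),
                  if_pos h1k]
        have hEj : (n:ℝ) * α n * ∑ p ∈ Finset.Icc 1 k, β p * ((j:ℝ)/(n:ℝ)) ^ p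
            ≤ E1 - c * (n:ℝ) * |β 1| := by
          have h2 := mul_le_mul_of_nonneg_left hkey (mul_nonneg hN.le hα0)
          have h3 : (n:ℝ) * α n *
              ((∑ p ∈ Finset.Icc 1 k, β p * ((1:ℝ)/(n:ℝ)) ^ p) + β 1 * ((j:ℝ)-1)/(n:ℝ))
              = E1 + α n * β 1 * ((j:ℝ)-1) := by
            rw [hE1]; field_simp
          rw [h3] at h2
          refine h2.trans ?_
          have h4 : c * (n:ℝ) ≤ α n * ((j:ℝ)-1) := by nlinarith
          have h5 : α n * β 1 * ((j:ℝ)-1) ≤ -(c * (n:ℝ) * |β 1|) := by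
            have h6 := mul_le_mul_of_nonpos_right h4 hβ1.le
            rw [abs_of_neg hβ1]
            nlinarith [h6]
          linarith
        have hjN : (j:ℝ) ≤ (n:ℝ) := by exact_mod_cast hjn
        have hcast : (0:ℝ) ≤ (n.choose j : ℝ) := by positivity
        have hexp := Real.exp_le_exp.2 hEj
        calc (j:ℝ) * (n.choose j : ℝ) *
              Real.exp ((n:ℝ) * α n * ∑ p ∈ Finset.Icc 1 k, β p * ((j:ℝ)/(n:ℝ)) ^ p)
            ≤ (n:ℝ) * (n.choose j : ℝ) *
              Real.exp ((n:ℝ) * α n * ∑ p ∈ Finset.Icc 1 k, β p * ((j:ℝ)/(n:ℝ)) ^ p) := by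
              gcongr
          _ ≤ (n:ℝ) * (n.choose j : ℝ) * Real.exp (E1 - c * (n:ℝ) * |β 1|) := by gcongr
    -- splitting off the j = 1 term
    have h1mem : 1 ∈ Finset.range (n+1) := Finset.mem_range.2 (by omega)
    have hterm1 : ((1:ℕ):ℝ) * (n.choose 1 : ℝ) *
        Real.exp ((n:ℝ) * α n * ∑ p ∈ Finset.Icc 1 k, β p * (((1:ℕ):ℝ)/(n:ℝ)) ^ p)
        = (n:ℝ) * Real.exp E1 := by
      rw [hE1]; norm_num [Nat.choose_one_right]
    have hsplit : ∑ j ∈ Finset.range (n + 1), (j : ℝ) * (n.choose j : ℝ) *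
            Real.exp ((n : ℝ) * α n * ∑ p ∈ Finset.Icc 1 k, β p * ((j : ℝ) / (n:ℝ)) ^ p)
        = (n:ℝ) * Real.exp E1 + ∑ j ∈ (Finset.range (n+1)).erase 1,
            (j : ℝ) * (n.choose j : ℝ) *
            Real.exp ((n : ℝ) * α n * ∑ p ∈ Finset.Icc 1 k, β p * ((j : ℝ) / (n:ℝ)) ^ p) := by
      rw [← Finset.add_sum_erase _ _ h1mem, hterm1]
    have hrest0 : (0:ℝ) ≤ ∑ j ∈ (Finset.range (n+1)).erase 1,
        (j : ℝ) * (n.choose j : ℝ) *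
        Real.exp ((n : ℝ) * α n * ∑ p ∈ Finset.Icc 1 k, β p * ((j : ℝ) / (n:ℝ)) ^ p) :=
      Finset.sum_nonneg fun j _ => by positivity
    have hrest_le : ∑ j ∈ (Finset.range (n+1)).erase 1,
        (j : ℝ) * (n.choose j : ℝ) *
        Real.exp ((n : ℝ) * α n * ∑ p ∈ Finset.Icc 1 k, β p * ((j : ℝ) / (n:ℝ)) ^ p)
        ≤ (n:ℝ) * Real.exp (E1 - c * (n:ℝ) * |β 1|) * 2 ^ n := by
      calc ∑ j ∈ (Finset.range (n+1)).erase 1,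
            (j : ℝ) * (n.choose j : ℝ) *
            Real.exp ((n : ℝ) * α n * ∑ p ∈ Finset.Icc 1 k, β p * ((j : ℝ) / (n:ℝ)) ^ p)
          ≤ ∑ j ∈ (Finset.range (n+1)).erase 1,
            (n:ℝ) * (n.choose j : ℝ) * Real.exp (E1 - c * (n:ℝ) * |β 1|) :=
            Finset.sum_le_sum hterm
        _ ≤ ∑ j ∈ Finset.range (n+1),
            (n:ℝ) * (n.choose j : ℝ) * Real.exp (E1 - c * (n:ℝ) * |β 1|) :=
            Finset.sum_le_sum_of_subset_of_nonneg (Finset.erase_subset _ _)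
              (fun j _ _ => by positivity)
        _ = (n:ℝ) * Real.exp (E1 - c * (n:ℝ) * |β 1|) *
              ∑ j ∈ Finset.range (n+1), (n.choose j : ℝ) := by
            rw [Finset.mul_sum]
            exact Finset.sum_congr rfl fun j _ => by ring
        _ = (n:ℝ) * Real.exp (E1 - c * (n:ℝ) * |β 1|) * 2 ^ n := by
            congr 1
            rw [← Nat.cast_sum, Nat.sum_range_choose]
            push_cast; ring
    have hden : (0:ℝ) < (n:ℝ) * Real.exp E1 := by positivity
    have h2n : (2:ℝ) ^ n = Real.exp ((n:ℝ) * Real.log 2) := by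
      rw [Real.exp_nat_mul, Real.exp_log two_pos]
    have heq : (n:ℝ) * Real.exp (E1 - c * (n:ℝ) * |β 1|) * 2 ^ n
        = Real.exp ((n:ℝ) * d) * ((n:ℝ) * Real.exp E1) := by
      rw [h2n, hdd,
        show E1 - c * (n:ℝ) * |β 1| = E1 + (-(c * (n:ℝ) * |β 1|)) from by ring,
        Real.exp_add,
        show (n:ℝ) * (Real.log 2 - c * |β 1|)
          = (n:ℝ) * Real.log 2 + (-(c * (n:ℝ) * |β 1|)) from by ring,
        Real.exp_add]
      ring
    have hrest_le' : ∑ j ∈ (Finset.range (n+1)).erase 1,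
        (j : ℝ) * (n.choose j : ℝ) *
        Real.exp ((n : ℝ) * α n * ∑ p ∈ Finset.Icc 1 k, β p * ((j : ℝ) / (n:ℝ)) ^ p)
        ≤ Real.exp ((n:ℝ) * d) * ((n:ℝ) * Real.exp E1) := heq ▸ hrest_le
    rw [hsplit]
    constructor
    · rw [le_div_iff₀ hden]
      linarith
    · rw [div_le_iff₀ hden]
      have hexp0 : (0:ℝ) < Real.exp ((n:ℝ) * d) := Real.exp_pos _
      nlinarith [hrest_le']
  exact tendsto_of_tendsto_of_tendsto_of_le_of_le'
    (tendsto_const_nhds : Tendsto (fun _ : ℕ => (1:ℝ)) atTop (nhds 1)) hup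
    (hmain.mono fun n hn => hn.1) (hmain.mono fun n hn => hn.2)
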